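/- arXiv:2411.04833 — 3 statements merged into one kernel-verified Lean document; each statement's English description precedes it below -/
import Mathlib

section
/- Let ℓ ≥ 1 and let w_min, w_max : Fin ℓ → ℝ satisfy w_min i ≤ w_max i for every i, let B = {w ∈ EuclideanSpace ℝ (Fin ℓ) | ∀ i, w_min i ≤ w i ≤ w_max i}, and let ϑ(c) = ⨅ over w ∈ B of ⟪c, w⟫. Suppose c ∈ EuclideanSpace ℝ (Fin ℓ) satisfies c i ≠ 0 for every i, and let w* be defined by w* i = w_min i if c i > 0 and w* i = w_max i if c i < 0. Then ϑ is differentiable at c and its gradient at c equals w*; equivalently, the Fréchet derivative of ϑ at c is the continuous linear map v ↦ ⟪v, w*⟫. -/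
open scoped RealInnerProductSpace

/-- Sensitivity of the box-constrained LP value: if all components of `c` are
nonzero, then `ϑ` is differentiable at `c` with gradient `w*`, i.e. its
Fréchet derivative at `c` is `v ↦ ⟪v, w*⟫`. -/
theorem box_LP_value_gradient (ℓ : ℕ) (hℓ : 1 ≤ ℓ)
    (wmin wmax : Fin ℓ → ℝ) (hw : ∀ i, wmin i ≤ wmax i)
    (B : Set (EuclideanSpace ℝ (Fin ℓ)))
    (hB : B = {w : EuclideanSpace ℝ (Fin ℓ) | ∀ i, wmin i ≤ w i ∧ w i ≤ wmax i})
    (ϑ : EuclideanSpace ℝ (Fin ℓ) → ℝ)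
    (hϑ : ∀ c, ϑ c = sInf ((fun w => ⟪c, w⟫) '' B))
    (c : EuclideanSpace ℝ (Fin ℓ)) (hc : ∀ i, c i ≠ 0)
    (wstar : EuclideanSpace ℝ (Fin ℓ))
    (hwstar : ∀ i, (c i > 0 → wstar i = wmin i) ∧ (c i < 0 → wstar i = wmax i)) :
    DifferentiableAt ℝ ϑ c ∧ HasGradientAt ϑ wstar c ∧
      HasFDerivAt ϑ ((innerSL ℝ).flip wstar) c := by
  -- wstar ∈ B
  have hwB : wstar ∈ B := by
    rw [hB]
    intro i
    rcases lt_or_gt_of_ne (hc i) with h | h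
    · rw [(hwstar i).2 h]; exact ⟨hw i, le_refl _⟩
    · rw [(hwstar i).1 h]; exact ⟨le_refl _, hw i⟩
  -- the key local identity
  have key : ∀ d : EuclideanSpace ℝ (Fin ℓ),
      (∀ i, (c i > 0 → d i > 0) ∧ (c i < 0 → d i < 0)) → ϑ d = ⟪d, wstar⟫ := by
    intro d hd
    rw [hϑ]
    apply IsLeast.csInf_eq
    constructor
    · exact ⟨wstar, hwB, rfl⟩
    · rintro x ⟨w, hwmem, rfl⟩
      rw [hB] at hwmem
      simp only [PiLp.inner_apply, RCLike.inner_apply, starRingEnd_apply, star_trivial]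
      apply Finset.sum_le_sum
      intro i _
      rcases lt_or_gt_of_ne (hc i) with h | h
      · have hdi := (hd i).2 h
        rw [(hwstar i).2 h]
        exact mul_le_mul_of_nonpos_right (hwmem i).2 hdi.le
      · have hdi := (hd i).1 h
        rw [(hwstar i).1 h]
        exact mul_le_mul_of_nonneg_right (hwmem i).1 hdi.le
  -- the set of such d is open and contains c
  have heq : ϑ =ᶠ[nhds c] fun d => ⟪d, wstar⟫ := by
    have hopen : IsOpen {d : EuclideanSpace ℝ (Fin ℓ) |
        ∀ i, (c i > 0 → d i > 0) ∧ (c i < 0 → d i < 0)} := by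
      have : {d : EuclideanSpace ℝ (Fin ℓ) |
          ∀ i, (c i > 0 → d i > 0) ∧ (c i < 0 → d i < 0)} =
          ⋂ i : Fin ℓ, ({d : EuclideanSpace ℝ (Fin ℓ) | c i > 0 → d i > 0} ∩
            {d | c i < 0 → d i < 0}) := by
        ext d; simp [Set.mem_iInter]
      rw [this]
      apply isOpen_iInter_of_finite
      intro i
      have hcont : Continuous fun d : EuclideanSpace ℝ (Fin ℓ) => d i :=
        (continuous_apply i).comp (PiLp.continuous_ofLp 2 _)
      apply IsOpen.inter
      · rcases lt_or_ge 0 (c i) with h | h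
        · simpa [h] using isOpen_lt continuous_const hcont
        · have : {d : EuclideanSpace ℝ (Fin ℓ) | c i > 0 → d i > 0} = Set.univ := by
            ext d; simp; intro hh; exact absurd hh (not_lt.mpr h)
          rw [this]; exact isOpen_univ
      · rcases lt_or_ge (c i) 0 with h | h
        · simpa [h] using isOpen_lt hcont continuous_const
        · have : {d : EuclideanSpace ℝ (Fin ℓ) | c i < 0 → d i < 0} = Set.univ := by
            ext d; simp; intro hh; exact absurd hh (not_lt.mpr h)
          rw [this]; exact isOpen_univ
    have hmem : c ∈ {d : EuclideanSpace ℝ (Fin ℓ) |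
        ∀ i, (c i > 0 → d i > 0) ∧ (c i < 0 → d i < 0)} := by
      intro i; exact ⟨fun h => h, fun h => h⟩
    filter_upwards [hopen.mem_nhds hmem] with d hd
    exact key d hd
  have hfd : HasFDerivAt ϑ ((innerSL ℝ).flip wstar) c := by
    have h1 : HasFDerivAt (fun d : EuclideanSpace ℝ (Fin ℓ) => ⟪d, wstar⟫)
        ((innerSL ℝ).flip wstar) c := ((innerSL ℝ).flip wstar).hasFDerivAt
    exact h1.congr_of_eventuallyEq heq
  refine ⟨hfd.differentiableAt, ?_, hfd⟩
  rw [hasGradientAt_iff_hasFDerivAt]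
  have hEq : ((InnerProductSpace.toDual ℝ (EuclideanSpace ℝ (Fin ℓ))) wstar
      : EuclideanSpace ℝ (Fin ℓ) →L[ℝ] ℝ) = (innerSL ℝ).flip wstar := by
    ext v
    simp only [InnerProductSpace.toDual_apply_apply, ContinuousLinearMap.flip_apply,
      innerSL_apply_apply]
    exact real_inner_comm _ _
  rw [hEq]
  exact hfd
end

section
/- Let ℓ, k ≥ 1, let A : Fin k → EuclideanSpace ℝ (Fin ℓ) be the rows of a constraint matrix and b : Fin k → ℝ, and let F = {w ∈ EuclideanSpace ℝ (Fin ℓ) | ∀ i, ⟪A i, w⟫ ≤ b i}. Assume F is nonempty and compact. Then the value function v(c) = ⨅ over w ∈ F of ⟪c, w⟫ is globally Lipschitz continuous with constant M = ⨆ over w ∈ F.extremePoints ℝ of ‖w‖₂; that is, |v(c) − v(c̃)| ≤ M · ‖c − c̃‖₂ for all c, c̃. -/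
open scoped RealInnerProductSpace

/-- Theorem 1 (from Cánovas et al.) for a nonempty bounded polyhedron
`F = {w | Aw ≤ b}`: the LP value function is Lipschitz in the cost vector
with constant the maximal norm of an extreme point of `F`. -/
theorem polyhedral_LP_value_lipschitz (ℓ k : ℕ) (hℓ : 1 ≤ ℓ) (hk : 1 ≤ k)
    (A : Fin k → EuclideanSpace ℝ (Fin ℓ)) (b : Fin k → ℝ)
    (F : Set (EuclideanSpace ℝ (Fin ℓ)))
    (hF : F = {w : EuclideanSpace ℝ (Fin ℓ) | ∀ i, ⟪A i, w⟫ ≤ b i})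
    (hne : F.Nonempty) (hcpt : IsCompact F)
    (v : EuclideanSpace ℝ (Fin ℓ) → ℝ)
    (hv : ∀ c, v c = sInf ((fun w => ⟪c, w⟫) '' F))
    (M : ℝ) (hM : M = sSup ((fun w => ‖w‖) '' (F.extremePoints ℝ))) :
    ∀ c c' : EuclideanSpace ℝ (Fin ℓ), |v c - v c'| ≤ M * ‖c - c'‖ := by
  -- F is convex
  have hconv : Convex ℝ F := by
    subst hF
    intro x hx y hy a b' ha hb' hab
    intro i
    have hxi := hx i
    have hyi := hy i
    simp only [inner_add_right, real_inner_smul_right]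
    have h1 := mul_le_mul_of_nonneg_left hxi ha
    have h2 := mul_le_mul_of_nonneg_left hyi hb'
    have h3 : a * b i + b' * b i = b i := by rw [← add_mul, hab, one_mul]
    linarith
  -- extreme points are nonempty
  have hext : (F.extremePoints ℝ).Nonempty := hcpt.extremePoints_nonempty hne
  -- norms on F are bounded
  obtain ⟨C, hC⟩ := hcpt.isBounded.exists_norm_le
  have hbdd : BddAbove ((fun w => ‖w‖) '' (F.extremePoints ℝ)) := by
    refine ⟨C, ?_⟩
    rintro r ⟨w, hw, rfl⟩
    exact hC w (extremePoints_subset hw)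
  -- every extreme point has norm ≤ M
  have hextle : ∀ w ∈ F.extremePoints ℝ, ‖w‖ ≤ M := fun w hw => by
    rw [hM]; exact le_csSup hbdd ⟨w, hw, rfl⟩
  -- hence every point of F has norm ≤ M, via Krein–Milman
  have hFle : ∀ w ∈ F, ‖w‖ ≤ M := by
    intro w hw
    have hKM := closure_convexHull_extremePoints hcpt hconv
    have hsub : F ⊆ Metric.closedBall (0 : EuclideanSpace ℝ (Fin ℓ)) M := by
      rw [← hKM]
      refine closure_minimal ?_ Metric.isClosed_closedBall
      refine convexHull_min ?_ (convex_closedBall _ _)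
      intro x hx
      simpa [Metric.mem_closedBall, dist_eq_norm] using hextle x hx
    simpa [Metric.mem_closedBall, dist_eq_norm] using hsub hw
  have hM0 : 0 ≤ M := by
    obtain ⟨w, hw⟩ := hext
    exact le_trans (norm_nonneg w) (hextle w hw)
  -- one-sided estimate
  have key : ∀ c c' : EuclideanSpace ℝ (Fin ℓ), v c - v c' ≤ M * ‖c - c'‖ := by
    intro c c'
    have hcont : Continuous fun w : EuclideanSpace ℝ (Fin ℓ) => ⟪c', w⟫ :=
      continuous_const.inner continuous_id
    obtain ⟨w', hw'F, hw'min⟩ := hcpt.exists_isMinOn hne hcont.continuousOn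
    -- v c' = ⟪c', w'⟫
    have hbelow : BddBelow ((fun w => ⟪c', w⟫) '' F) :=
      ⟨⟪c', w'⟫, by rintro r ⟨w, hw, rfl⟩; exact hw'min hw⟩
    have hvc' : v c' = ⟪c', w'⟫ := by
      rw [hv]
      refine le_antisymm (csInf_le hbelow ⟨w', hw'F, rfl⟩) ?_
      refine le_csInf (hne.image _) ?_
      rintro r ⟨w, hw, rfl⟩
      exact hw'min hw
    have hbelowc : BddBelow ((fun w => ⟪c, w⟫) '' F) := by
      refine ⟨-(‖c‖ * M), ?_⟩
      rintro r ⟨w, hw, rfl⟩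
      have h1 : |⟪c, w⟫| ≤ ‖c‖ * ‖w‖ := abs_real_inner_le_norm c w
      have h2 : ‖c‖ * ‖w‖ ≤ ‖c‖ * M :=
        mul_le_mul_of_nonneg_left (hFle w hw) (norm_nonneg c)
      have := neg_abs_le (⟪c, w⟫)
      linarith
    have hvc : v c ≤ ⟪c, w'⟫ := by
      rw [hv]; exact csInf_le hbelowc ⟨w', hw'F, rfl⟩
    have hdiff : v c - v c' ≤ ⟪c - c', w'⟫ := by
      rw [hvc', ]
      have : ⟪c - c', w'⟫ = ⟪c, w'⟫ - ⟪c', w'⟫ := by rw [inner_sub_left]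
      linarith [hvc, this.ge, this.le]
    refine hdiff.trans ?_
    calc ⟪c - c', w'⟫ ≤ ‖c - c'‖ * ‖w'‖ := real_inner_le_norm _ _
      _ ≤ ‖c - c'‖ * M := mul_le_mul_of_nonneg_left (hFle w' hw'F) (norm_nonneg _)
      _ = M * ‖c - c'‖ := mul_comm _ _
  intro c c'
  rw [abs_sub_le_iff]
  refine ⟨key c c', ?_⟩
  have := key c' c
  rwa [norm_sub_rev] at this
end

section
/- Let n, m ≥ 1 and let X be a subset of EuclideanSpace ℝ (Fin n). Let ν : X → EuclideanSpace ℝ (Fin n) (a normal field), φ : X → EuclideanSpace ℝ (Fin n) (a drift), and G : X → (EuclideanSpace ℝ (Fin m) →ₗ[ℝ] EuclideanSpace ℝ (Fin n)) (an input map). Let u_min, u_max : Fin m → ℝ satisfy u_min i ≤ u_max i for every i and set U = {u | ∀ i, u_min i ≤ u i ≤ u_max i}. Define b* : X → ℝ by b*(x) = ⨆ over u ∈ U of ⟪ν(x), φ(x) + G(x) u⟫, and assume b* is Lipschitz on X with constant L ≥ 0. Suppose a set S ⊆ X, points x₁, …, x_N ∈ X, and radii r₁, …, r_N ≥ 0 satisfy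 S ⊆ ⋃ᵢ closedBall(xᵢ, rᵢ) and b*(xᵢ) ≥ L · rᵢ for all i. Then for every x ∈ S there exists u ∈ U with ⟪ν(x), φ(x) + G(x) u⟫ ≥ 0. -/
open scoped RealInnerProductSpace

/-- Theorem 2 (main theorem): if the feasibility value
`b*(x) = sup_{u ∈ U} ⟪ν(x), φ(x) + G(x) u⟫` is `L`-Lipschitz on `X`, the set
`S` is covered by finitely many closed balls around points `xᵢ`, and
`b*(xᵢ) ≥ L·rᵢ` at each center, then at every point of `S` some admissible
input `u ∈ U` produces a nonnegative normal flow component. -/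
theorem safe_set_finite_verification (n m : ℕ) (hn : 1 ≤ n) (hm : 1 ≤ m)
    (X : Set (EuclideanSpace ℝ (Fin n)))
    (ν φ : X → EuclideanSpace ℝ (Fin n))
    (G : X → (EuclideanSpace ℝ (Fin m) →ₗ[ℝ] EuclideanSpace ℝ (Fin n)))
    (umin umax : Fin m → ℝ) (hu : ∀ i, umin i ≤ umax i)
    (U : Set (EuclideanSpace ℝ (Fin m)))
    (hU : U = {u : EuclideanSpace ℝ (Fin m) | ∀ i, umin i ≤ u i ∧ u i ≤ umax i})
    (bstar : X → ℝ)
    (hbstar : ∀ x : X, bstar x = sSup ((fun u => ⟪ν x, φ x + G x u⟫) '' U))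
    (L : ℝ) (hL : 0 ≤ L)
    (hlip : ∀ x y : X, |bstar x - bstar y| ≤ L * dist x y)
    (S : Set X) (N : ℕ) (xc : Fin N → X) (r : Fin N → ℝ) (hr : ∀ i, 0 ≤ r i)
    (hcover : S ⊆ ⋃ i, Metric.closedBall (xc i) (r i))
    (hcenters : ∀ i, bstar (xc i) ≥ L * r i) :
    ∀ x ∈ S, ∃ u ∈ U, 0 ≤ ⟪ν x, φ x + G x u⟫ := by
  intro x hx
  -- U is compact and nonempty
  have hUeq : U = (EuclideanSpace.equiv (Fin m) ℝ) ⁻¹' (Set.pi Set.univ fun i => Set.Icc (umin i) (umax i)) := by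
    rw [hU]
    ext u
    simp only [Set.mem_setOf_eq, Set.mem_preimage, Set.mem_pi, Set.mem_univ, Set.mem_Icc,
      forall_true_left]
    rfl
  have hcompact : IsCompact U := by
    rw [hUeq]
    have h1 : IsCompact (Set.pi Set.univ fun i => Set.Icc (umin i) (umax i)) :=
      isCompact_univ_pi fun i => isCompact_Icc
    have := h1.image (EuclideanSpace.equiv (Fin m) ℝ).symm.continuous
    convert this using 1
    ext u
    simp only [Set.mem_image, Set.mem_preimage]
    constructor
    · intro h
      exact ⟨_, h, ((EuclideanSpace.equiv (Fin m) ℝ).symm_apply_apply u)⟩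
    · rintro ⟨v, hv, rfl⟩
      exact hv
  have hne : U.Nonempty := by
    rw [hU]
    exact ⟨WithLp.toLp 2 (fun i => umin i), fun i => ⟨le_refl _, hu i⟩⟩
  -- bstar x ≥ 0
  obtain ⟨i, hi⟩ := Set.mem_iUnion.mp (hcover hx)
  have hdist : dist x (xc i) ≤ r i := Metric.mem_closedBall.mp hi
  have hbx : 0 ≤ bstar x := by
    have h1 := hlip (xc i) x
    have h2 : bstar (xc i) - bstar x ≤ L * r i := by
      calc bstar (xc i) - bstar x ≤ |bstar (xc i) - bstar x| := le_abs_self _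
        _ ≤ L * dist (xc i) x := h1
        _ ≤ L * r i := by
            rw [dist_comm]; exact mul_le_mul_of_nonneg_left hdist hL
    linarith [hcenters i]
  -- sup attained
  have hcont : ContinuousOn (fun u => ⟪ν x, φ x + G x u⟫) U := by
    have : Continuous (fun u : EuclideanSpace ℝ (Fin m) => ⟪ν x, φ x + G x u⟫) := by
      have hG : Continuous (G x) := (G x).continuous_of_finiteDimensional
      exact (continuous_const.inner (continuous_const.add hG))
    exact this.continuousOn
  obtain ⟨u₀, hu₀U, hmax⟩ := hcompact.exists_isMaxOn hne hcont
  refine ⟨u₀, hu₀U, ?_⟩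
  have hsup : sSup ((fun u => ⟪ν x, φ x + G x u⟫) '' U) ≤ ⟪ν x, φ x + G x u₀⟫ := by
    apply csSup_le (hne.image _)
    rintro y ⟨u, huU, rfl⟩
    exact hmax huU
  calc (0:ℝ) ≤ bstar x := hbx
    _ = sSup ((fun u => ⟪ν x, φ x + G x u⟫) '' U) := hbstar x
    _ ≤ _ := hsup
end
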